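/- Let N ≥ 1, a ∈ (0,1), λ_j > 0 for each j ∈ Fin N, let p be an N×N stochastic matrix, and let μ_j be probability measures on [0,∞) with β_j(z) := ∫ e^{-z t} dμ_j(t). For z ∈ ℂ with z ≠ λ_j for all j, set L(z) := diag(λ_j/(λ_j − z)), B(z) := diag(β_j(z)) and H(z) := L(z) · pᵀ · B(z). Fix s ∈ ℂ with Re s ≥ 0 such that a^m s ≠ λ_j for all m ∈ ℕ and all j. Then there exists a constant c < ∞ such that for all n ∈ ℕ and all i, j: |(H(s) H(a s) ⋯ H(a^n s))_{i j}| ≤ c · ((pᵀ)^{n+1})_{i j}; in particular, all entries of the partial products ∏_{m=0}^{n} H(a^m s) are bounded by c uniformly in n. -/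

import Mathlib

open MeasureTheory Matrix

/-- Powers of a matrix with nonnegative entries have nonnegative entries. -/
lemma aux_pow_nonneg {N : ℕ} (q : Matrix (Fin N) (Fin N) ℝ)
    (hq0 : ∀ i j, 0 ≤ q i j) : ∀ (k : ℕ) (i j : Fin N), 0 ≤ (q ^ k) i j := by
  intro k
  induction k with
  | zero =>
      intro i j
      by_cases h : i = j <;> simp [pow_zero, Matrix.one_apply, h]
  | succ k ih =>
      intro i j
      rw [pow_succ, Matrix.mul_apply]
      exact Finset.sum_nonneg fun l _ => mul_nonneg (ih i l) (hq0 l j)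

/-- Powers of a matrix with nonnegative entries and unit column sums have
unit column sums. -/
lemma aux_pow_colsum {N : ℕ} (q : Matrix (Fin N) (Fin N) ℝ)
    (hq1 : ∀ j, ∑ i, q i j = 1) : ∀ (k : ℕ) (j : Fin N), ∑ i, (q ^ k) i j = 1 := by
  intro k
  induction k with
  | zero =>
      intro j
      simp [pow_zero, Matrix.one_apply]
  | succ k ih =>
      intro j
      simp only [pow_succ', Matrix.mul_apply]
      rw [Finset.sum_comm]
      have : ∀ l : Fin N, ∑ i, q i l * (q ^ k) l j = (q ^ k) l j := by
        intro l
        rw [← Finset.sum_mul, hq1 l, one_mul]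
      simp_rw [this]
      exact ih j

/-- Lemma 2.2 of the paper: uniform boundedness of the matrix products
`∏_{m=0}^{n} H(a^m s)` with `H(z) = L(z) pᵀ B*(z)`: there is `c < ∞` with
`|(H(s) H(a s) ⋯ H(a^n s))_{i j}| ≤ c ((pᵀ)^{n+1})_{i j} ≤ c`. -/
theorem stmt_3 (N : ℕ) (hN : 1 ≤ N) (a : ℝ) (ha : a ∈ Set.Ioo (0:ℝ) 1)
    (lam : Fin N → ℝ) (hlam : ∀ j, 0 < lam j)
    (p : Fin N → Fin N → ℝ) (hp0 : ∀ i j, 0 ≤ p i j) (hp1 : ∀ i, ∑ j, p i j = 1)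
    (μ : Fin N → Measure ℝ) (hμprob : ∀ j, IsProbabilityMeasure (μ j))
    (hμsupp : ∀ j, μ j (Set.Iio 0) = 0)
    (β : Fin N → ℂ → ℂ)
    (hβ : ∀ j z, β j z = ∫ t, Complex.exp (-z * t) ∂(μ j))
    (L B H : ℂ → Matrix (Fin N) (Fin N) ℂ)
    (hL : ∀ z, L z = Matrix.diagonal fun j => (lam j : ℂ) / ((lam j : ℂ) - z))
    (hB : ∀ z, B z = Matrix.diagonal fun j => β j z)
    (hH : ∀ z, H z = L z * (Matrix.of fun i j => (p j i : ℂ)) * B z)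
    (s : ℂ) (hs : 0 ≤ s.re)
    (hsm : ∀ (m : ℕ) (j : Fin N), (a : ℂ) ^ m * s ≠ (lam j : ℂ)) :
    ∃ c : ℝ, ∀ (n : ℕ) (i j : Fin N),
      ‖(((List.range (n+1)).map fun m => H ((a : ℂ) ^ m * s)).prod) i j‖
          ≤ c * (((Matrix.of fun i j => p j i) ^ (n+1) : Matrix (Fin N) (Fin N) ℝ) i j) ∧
      ‖(((List.range (n+1)).map fun m => H ((a : ℂ) ^ m * s)).prod) i j‖ ≤ c := by
  haveI : Nonempty (Fin N) := ⟨⟨0, by omega⟩⟩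
  obtain ⟨ha0, ha1⟩ := ha
  set Q : Matrix (Fin N) (Fin N) ℝ := Matrix.of fun i j => p j i with hQdef
  have hQ0 : ∀ i j, 0 ≤ Q i j := fun i j => hp0 j i
  have hQcol : ∀ j, ∑ i, Q i j = 1 := fun j => hp1 j
  have hQpow0 : ∀ (k : ℕ) (i j : Fin N), 0 ≤ (Q ^ k) i j := aux_pow_nonneg Q hQ0
  have hQpow1 : ∀ (k : ℕ) (i j : Fin N), (Q ^ k) i j ≤ 1 := by
    intro k i j
    have h := aux_pow_colsum Q hQcol k j
    calc (Q ^ k) i j ≤ ∑ i', (Q ^ k) i' j :=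
          Finset.single_le_sum (fun i' _ => hQpow0 k i' j) (Finset.mem_univ i)
      _ = 1 := h
  -- bound on β
  have hβle : ∀ (j : Fin N) (z : ℂ), 0 ≤ z.re → ‖β j z‖ ≤ 1 := by
    intro j z hz
    haveI := hμprob j
    rw [hβ]
    have h1 : ∀ᵐ (t : ℝ) ∂(μ j), ‖Complex.exp (-z * (t : ℂ))‖ ≤ 1 := by
      have h0 : ∀ᵐ (t : ℝ) ∂(μ j), 0 ≤ t := by
        rw [ae_iff]
        convert hμsupp j using 2
        ext t
        simp [not_le]
      filter_upwards [h0] with t ht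
      rw [Complex.norm_exp]
      have hre : (-z * (t : ℂ)).re = -(z.re * t) := by
        simp [Complex.mul_re]
      rw [hre, Real.exp_le_one_iff]
      nlinarith
    have := norm_integral_le_of_norm_le_const h1
    simpa [measure_univ] using this
  -- the per-factor constants
  set cc : ℕ → ℝ := fun m =>
    Finset.univ.sup' Finset.univ_nonempty
      (fun i => ‖(lam i : ℂ) / ((lam i : ℂ) - (a : ℂ) ^ m * s)‖) with hccdef
  have hcc0 : ∀ m, 0 ≤ cc m := by
    intro m
    obtain ⟨i⟩ := ‹Nonempty (Fin N)›
    exact le_trans (norm_nonneg _)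
      (Finset.le_sup' (fun i => ‖(lam i : ℂ) / ((lam i : ℂ) - (a : ℂ) ^ m * s)‖)
        (Finset.mem_univ i))
  -- entrywise bound on H
  have hHle : ∀ (m : ℕ) (i j : Fin N),
      ‖H ((a : ℂ) ^ m * s) i j‖ ≤ cc m * Q i j := by
    intro m i j
    have hre : (0:ℝ) ≤ ((a : ℂ) ^ m * s).re := by
      have : ((a : ℂ) ^ m * s).re = a ^ m * s.re := by
        rw [← Complex.ofReal_pow, Complex.re_ofReal_mul]
      rw [this]
      positivity
    rw [hH, hL, hB]
    have hentry : (Matrix.diagonal (fun j => (lam j : ℂ) / ((lam j : ℂ) - (a : ℂ) ^ m * s)) *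
          (Matrix.of fun i j => (p j i : ℂ)) *
          Matrix.diagonal (fun j => β j ((a : ℂ) ^ m * s))) i j
        = ((lam i : ℂ) / ((lam i : ℂ) - (a : ℂ) ^ m * s)) * (p j i : ℂ) *
            β j ((a : ℂ) ^ m * s) := by
      rw [Matrix.mul_diagonal, Matrix.diagonal_mul]
      rfl
    rw [hentry]
    rw [norm_mul, norm_mul, Complex.norm_real, Real.norm_of_nonneg (hp0 j i)]
    have h1 : ‖(lam i : ℂ) / ((lam i : ℂ) - (a : ℂ) ^ m * s)‖ ≤ cc m :=
      Finset.le_sup' (fun i => ‖(lam i : ℂ) / ((lam i : ℂ) - (a : ℂ) ^ m * s)‖)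
        (Finset.mem_univ i)
    have h2 : ‖β j ((a : ℂ) ^ m * s)‖ ≤ 1 := hβle j _ hre
    calc ‖(lam i : ℂ) / ((lam i : ℂ) - (a : ℂ) ^ m * s)‖ * p j i *
            ‖β j ((a : ℂ) ^ m * s)‖
        ≤ cc m * p j i * 1 := by
          apply mul_le_mul (mul_le_mul_of_nonneg_right h1 (hp0 j i)) h2
            (norm_nonneg _) (mul_nonneg (hcc0 m) (hp0 j i))
      _ = cc m * Q i j := by rw [mul_one]; rfl
  -- key inductive entrywise bound on the products
  have key : ∀ (n : ℕ) (i j : Fin N),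
      ‖(((List.range (n+1)).map fun m => H ((a : ℂ) ^ m * s)).prod) i j‖
        ≤ (∏ m ∈ Finset.range (n+1), cc m) * ((Q ^ (n+1)) i j) := by
    intro n
    induction n with
    | zero =>
        intro i j
        rw [show List.range 1 = [0] from rfl]
        simpa [pow_one] using hHle 0 i j
    | succ n ih =>
        intro i j
        rw [List.range_succ, List.map_append, List.prod_append]
        simp only [List.map_cons, List.map_nil, List.prod_cons, List.prod_nil, mul_one]
        rw [Matrix.mul_apply]
        calc ‖∑ k, (((List.range (n+1)).map fun m => H ((a : ℂ) ^ m * s)).prod) i k *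
                H ((a : ℂ) ^ (n+1) * s) k j‖
            ≤ ∑ k, ‖(((List.range (n+1)).map fun m => H ((a : ℂ) ^ m * s)).prod) i k *
                H ((a : ℂ) ^ (n+1) * s) k j‖ := norm_sum_le _ _
          _ ≤ ∑ k, ((∏ m ∈ Finset.range (n+1), cc m) * ((Q ^ (n+1)) i k)) *
                (cc (n+1) * Q k j) := by
              apply Finset.sum_le_sum
              intro k _
              rw [norm_mul]
              exact mul_le_mul (ih i k) (hHle (n+1) k j) (norm_nonneg _)
                (mul_nonneg (Finset.prod_nonneg fun m _ => hcc0 m) (hQpow0 (n+1) i k))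
          _ = (∏ m ∈ Finset.range (n+2), cc m) * ((Q ^ (n+2)) i j) := by
              conv_rhs => rw [Finset.prod_range_succ, pow_succ, Matrix.mul_apply]
              rw [Finset.mul_sum]
              apply Finset.sum_congr rfl
              intro k _
              ring
  -- now bound the product of the constants uniformly
  set lmin : ℝ := Finset.univ.inf' Finset.univ_nonempty lam with hlmindef
  have hlmin0 : 0 < lmin := by
    obtain ⟨i, -, hi⟩ := Finset.exists_mem_eq_inf' (Finset.univ_nonempty) lam
    rw [hlmindef, hi]
    exact hlam i
  have hlminle : ∀ j, lmin ≤ lam j := fun j => Finset.inf'_le lam (Finset.mem_univ j)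
  obtain ⟨M, hM⟩ := exists_pow_lt_of_lt_one
    (show (0:ℝ) < lmin / (2 * (‖s‖ + 1)) by positivity) ha1
  have habs_s : ∀ m : ℕ, ‖(a : ℂ) ^ m * s‖ = a ^ m * ‖s‖ := by
    intro m
    rw [norm_mul, ← Complex.ofReal_pow, Complex.norm_real,
      Real.norm_of_nonneg (by positivity)]
  -- the uniform exponent constant
  set K : ℝ := 2 * ‖s‖ / lmin +
    ∑ m ∈ Finset.range M, max 0 (Real.log (cc m) / a ^ m) with hKdef
  have hK1 : 2 * ‖s‖ / lmin ≤ K := by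
    rw [hKdef]
    have : (0:ℝ) ≤ ∑ m ∈ Finset.range M, max 0 (Real.log (cc m) / a ^ m) :=
      Finset.sum_nonneg fun m _ => le_max_left _ _
    linarith
  have hK0 : 0 ≤ K := le_trans (by positivity) hK1
  have hKm : ∀ m : ℕ, cc m ≤ Real.exp (K * a ^ m) := by
    intro m
    by_cases hmM : m < M
    · -- finitely many initial factors
      have hterm : Real.log (cc m) / a ^ m ≤ K := by
        rw [hKdef]
        have h1 : max 0 (Real.log (cc m) / a ^ m) ≤
            ∑ m' ∈ Finset.range M, max 0 (Real.log (cc m') / a ^ m') :=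
          Finset.single_le_sum (f := fun m' => max 0 (Real.log (cc m') / a ^ m'))
            (fun m' _ => le_max_left _ _) (Finset.mem_range.mpr hmM)
        have h2 : Real.log (cc m) / a ^ m ≤ max 0 (Real.log (cc m) / a ^ m) := le_max_right _ _
        have h3 : (0:ℝ) ≤ 2 * ‖s‖ / lmin := by positivity
        linarith
      have hlog : Real.log (cc m) ≤ K * a ^ m := by
        rw [div_le_iff₀ (by positivity : (0:ℝ) < a ^ m)] at hterm
        linarith [hterm]
      by_cases hc : 0 < cc m
      · calc cc m = Real.exp (Real.log (cc m)) := (Real.exp_log hc).symm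
          _ ≤ Real.exp (K * a ^ m) := Real.exp_le_exp.mpr hlog
      · push_neg at hc
        exact le_trans hc (Real.exp_pos _).le
    · -- the tail: small argument
      push_neg at hmM
      have hx : a ^ m * ‖s‖ ≤ lmin / 2 := by
        have h1 : a ^ m ≤ a ^ M := pow_le_pow_of_le_one ha0.le ha1.le hmM
        have h2 : a ^ m * ‖s‖ ≤ a ^ M * (‖s‖ + 1) := by
          have := norm_nonneg s
          nlinarith [pow_pos ha0 M, pow_pos ha0 m]
        have h3 : a ^ M * (‖s‖ + 1) ≤ lmin / 2 := by
          rw [show lmin / 2 = lmin / (2 * (‖s‖ + 1)) * (‖s‖ + 1) by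
            field_simp]
          exact mul_le_mul_of_nonneg_right hM.le (by positivity)
        linarith
      set x : ℝ := a ^ m * ‖s‖ with hxdef
      have hx0 : 0 ≤ x := by positivity
      apply Finset.sup'_le
      intro i _
      have hden : lam i - x ≥ lmin / 2 := by
        have := hlminle i
        linarith
      have hdenpos : 0 < lam i - x := lt_of_lt_of_le (by linarith) hden
      have habsden : lam i - x ≤ ‖(lam i : ℂ) - (a : ℂ) ^ m * s‖ := by
        have h1 : ‖(lam i : ℂ)‖ - ‖(a : ℂ) ^ m * s‖ ≤ ‖(lam i : ℂ) - (a : ℂ) ^ m * s‖ :=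
          norm_sub_norm_le _ _
        rw [Complex.norm_real, Real.norm_of_nonneg (hlam i).le, habs_s m] at h1
        exact h1
      have hstep1 : ‖(lam i : ℂ) / ((lam i : ℂ) - (a : ℂ) ^ m * s)‖
          ≤ lam i / (lam i - x) := by
        rw [norm_div, Complex.norm_real, Real.norm_of_nonneg (hlam i).le]
        apply div_le_div_of_nonneg_left (hlam i).le ?_ habsden
        exact hdenpos
      have hstep2 : lam i / (lam i - x) ≤ 1 + 2 * x / lmin := by
        rw [div_le_iff₀ hdenpos]
        have h1 := hlminle i
        have h2 : 0 < lam i := hlam i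
        have h3 : 2 * x / lmin ≤ 1 := by
          rw [div_le_one hlmin0]; linarith
        have h4 : 2 * x ≤ 2 * x / lmin * lam i := by
          have e : 2 * x / lmin * lmin = 2 * x := by field_simp
          nlinarith [mul_le_mul_of_nonneg_left h1 (by positivity : (0:ℝ) ≤ 2 * x / lmin)]
        nlinarith
      have hstep3 : 1 + 2 * x / lmin ≤ Real.exp (K * a ^ m) := by
        have h1 : 2 * x / lmin + 1 ≤ Real.exp (2 * x / lmin) := Real.add_one_le_exp _
        have h2 : 2 * x / lmin ≤ K * a ^ m := by
          rw [hxdef]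
          have : 2 * (a ^ m * ‖s‖) / lmin = (2 * ‖s‖ / lmin) * a ^ m := by
            field_simp
          rw [this]
          exact mul_le_mul_of_nonneg_right hK1 (by positivity)
        calc 1 + 2 * x / lmin ≤ Real.exp (2 * x / lmin) := by linarith
          _ ≤ Real.exp (K * a ^ m) := Real.exp_le_exp.mpr h2
      linarith
  -- the final uniform constant
  refine ⟨Real.exp (K / (1 - a)), ?_⟩
  have hc0 : 0 < Real.exp (K / (1 - a)) := Real.exp_pos _
  have hgeo : ∀ n : ℕ, ∑ m ∈ Finset.range n, a ^ m ≤ 1 / (1 - a) := by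
    intro n
    rw [geom_sum_eq (by linarith : a ≠ 1)]
    rw [show (a ^ n - 1) / (a - 1) = (1 - a ^ n) / (1 - a) by
      rw [div_eq_div_iff (by linarith : a - 1 ≠ 0) (by linarith : 1 - a ≠ 0)]; ring]
    gcongr
    all_goals nlinarith [pow_nonneg ha0.le n]
  have hprodle : ∀ n : ℕ, (∏ m ∈ Finset.range (n+1), cc m) ≤ Real.exp (K / (1 - a)) := by
    intro n
    calc (∏ m ∈ Finset.range (n+1), cc m)
        ≤ ∏ m ∈ Finset.range (n+1), Real.exp (K * a ^ m) :=
          Finset.prod_le_prod (fun m _ => hcc0 m) (fun m _ => hKm m)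
      _ = Real.exp (∑ m ∈ Finset.range (n+1), K * a ^ m) := (Real.exp_sum _ _).symm
      _ ≤ Real.exp (K / (1 - a)) := by
          apply Real.exp_le_exp.mpr
          rw [← Finset.mul_sum]
          calc K * ∑ m ∈ Finset.range (n+1), a ^ m ≤ K * (1 / (1 - a)) :=
                mul_le_mul_of_nonneg_left (hgeo (n+1)) hK0
            _ = K / (1 - a) := by ring
  intro n i j
  constructor
  · calc ‖(((List.range (n+1)).map fun m => H ((a : ℂ) ^ m * s)).prod) i j‖
        ≤ (∏ m ∈ Finset.range (n+1), cc m) * ((Q ^ (n+1)) i j) := key n i j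
      _ ≤ Real.exp (K / (1 - a)) * ((Q ^ (n+1)) i j) :=
          mul_le_mul_of_nonneg_right (hprodle n) (hQpow0 (n+1) i j)
  · calc ‖(((List.range (n+1)).map fun m => H ((a : ℂ) ^ m * s)).prod) i j‖
        ≤ (∏ m ∈ Finset.range (n+1), cc m) * ((Q ^ (n+1)) i j) := key n i j
      _ ≤ Real.exp (K / (1 - a)) * 1 := by
          apply mul_le_mul (hprodle n) (hQpow1 (n+1) i j) (hQpow0 (n+1) i j) hc0.le
      _ = Real.exp (K / (1 - a)) := mul_one _
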